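/- Let G be a finite group and let H ∈ CD(G) with H < G a proper subgroup. Then the normal closure H^G = ⟨H^x : x ∈ G⟩ is a proper subgroup of G. -/

import Mathlib

open Pointwise

/-- The Chermak-Delgado measure of a subgroup: `m_G(H) = |H| * |C_G(H)|`. -/
noncomputable def cdMeasure {G : Type*} [Group G] (H : Subgroup G) : Nat :=
  Nat.card H * Nat.card (Subgroup.centralizer (H : Set G))

/-- The Chermak-Delgado lattice of `G`: the subgroups of maximal Chermak-Delgado measure. -/
def CD (G : Type*) [Group G] : Set (Subgroup G) :=
  {H | ∀ K : Subgroup G, cdMeasure K ≤ cdMeasure H}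

/-- The conjugate subgroup `H^x = x⁻¹ H x`. -/
def conjSub {G : Type*} [Group G] (H : Subgroup G) (x : G) : Subgroup G :=
  Subgroup.map ((MulAut.conj x⁻¹).toMonoidHom) H

namespace CDaux

open Subgroup

variable {G : Type*} [Group G]

lemma mem_conjSub {H : Subgroup G} {x g : G} : g ∈ conjSub H x ↔ x * g * x⁻¹ ∈ H := by
  constructor
  · rintro ⟨h, hh, rfl⟩
    simpa [mul_assoc] using hh
  · intro h
    exact ⟨x * g * x⁻¹, h, by simp [MulAut.conj_apply, mul_assoc]⟩

lemma conjSub_mono {H K : Subgroup G} (h : H ≤ K) (x : G) : conjSub H x ≤ conjSub K x :=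
  Subgroup.map_mono h

lemma conjSub_one (H : Subgroup G) : conjSub H 1 = H := by
  ext g; simp [mem_conjSub]

lemma conjSub_eq_self {H : Subgroup G} {x : G} (hx : x ∈ H) : conjSub H x = H := by
  ext g
  rw [mem_conjSub]
  constructor
  · intro h
    have := mul_mem (mul_mem (inv_mem hx) h) hx
    simpa [mul_assoc] using this
  · intro h
    exact mul_mem (mul_mem hx h) (inv_mem hx)

lemma card_conjSub (H : Subgroup G) (x : G) : Nat.card (conjSub H x) = Nat.card H :=
  (Nat.card_congr (Subgroup.equivMapOfInjective H _ (MulAut.conj x⁻¹).injective).toEquiv).symm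

lemma centralizer_conjSub (H : Subgroup G) (x : G) :
    centralizer ((conjSub H x : Subgroup G) : Set G) = conjSub (centralizer (H : Set G)) x := by
  ext g
  rw [mem_conjSub, mem_centralizer_iff, mem_centralizer_iff]
  constructor
  · intro hg h hh
    have h1 : x⁻¹ * h * x ∈ conjSub H x := mem_conjSub.2 (by simpa [mul_assoc] using hh)
    have h2 := hg _ h1
    have := congrArg (fun t => x * t * x⁻¹) h2
    simpa [mul_assoc] using this
  · intro hg h hh
    rcases mem_conjSub.1 hh with hh'
    have h2 := hg _ hh'
    -- h2 : (x*h*x⁻¹) * (x*g*x⁻¹) = (x*g*x⁻¹) * (x*h*x⁻¹)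
    have := congrArg (fun t => x⁻¹ * t * x) h2
    simpa [mul_assoc] using this

lemma cdMeasure_conjSub (H : Subgroup G) (x : G) : cdMeasure (conjSub H x) = cdMeasure H := by
  rw [cdMeasure, cdMeasure, card_conjSub, centralizer_conjSub, card_conjSub]

/-- Product formula: `|A*B| * |A ⊓ B| = |A| * |B|`. -/
lemma card_mul_card_inf [Finite G] (A B : Subgroup G) :
    Nat.card (↑A * ↑B : Set G) * Nat.card (A ⊓ B : Subgroup G) = Nat.card A * Nat.card B := by
  letI : SMul (↥A × ↥B) G := ⟨fun p g => p.1 * g * (p.2 : G)⁻¹⟩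
  have smul_def : ∀ (p : ↥A × ↥B) (g : G), p • g = p.1 * g * (p.2 : G)⁻¹ := fun _ _ => rfl
  letI : MulAction (↥A × ↥B) G :=
    { one_smul := fun g => by rw [smul_def]; simp
      mul_smul := fun p q g => by
        rw [smul_def, smul_def, smul_def, Prod.fst_mul, Prod.snd_mul]
        push_cast
        group }
  have horb : MulAction.orbit (↥A × ↥B) (1 : G) = ↑A * ↑B := by
    ext g
    constructor
    · rintro ⟨p, rfl⟩
      have hp : p • (1 : G) ∈ (↑A * ↑B : Set G) := by
        rw [smul_def]
        simpa using Set.mul_mem_mul p.1.2 (inv_mem p.2.2)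
      exact hp
    · rintro ⟨a, ha, b, hb, rfl⟩
      refine ⟨(⟨a, ha⟩, ⟨b⁻¹, inv_mem hb⟩), ?_⟩
      show ((⟨a, ha⟩, ⟨b⁻¹, inv_mem hb⟩) : ↥A × ↥B) • (1 : G) = a * b
      rw [smul_def]
      simp
  have hstab : Nat.card (MulAction.stabilizer (↥A × ↥B) (1 : G)) =
      Nat.card (A ⊓ B : Subgroup G) := by
    refine Nat.card_congr ?_
    have hmem : ∀ p : ↥A × ↥B, p ∈ MulAction.stabilizer (↥A × ↥B) (1 : G) ↔
        ((p.1 : G) = p.2) := by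
      intro p
      rw [MulAction.mem_stabilizer_iff, smul_def]
      constructor
      · intro h; have := congrArg (fun t => t * (p.2 : G)) h; simpa [mul_assoc] using this
      · intro h; rw [h]; simp
    exact
      { toFun := fun q => ⟨(q.1.1 : G), ⟨q.1.1.2, by
          have := (hmem q.1).1 q.2; rw [this]; exact q.1.2.2⟩⟩
        invFun := fun d => ⟨(⟨d, d.2.1⟩, ⟨d, d.2.2⟩), (hmem _).2 rfl⟩
        left_inv := fun q => by
          ext
          · rfl
          · exact ((hmem q.1).1 q.2)
        right_inv := fun d => rfl }
  have := MulAction.orbitProdStabilizerEquivGroup (↥A × ↥B) (1 : G)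
  have hcard := Nat.card_congr this
  rw [Nat.card_prod, Nat.card_prod, horb, hstab] at hcard
  exact hcard

variable [Fintype G]

lemma cdMeasure_pos (H : Subgroup G) : 0 < cdMeasure H :=
  Nat.mul_pos Nat.card_pos Nat.card_pos

lemma card_pos_set (s : Set G) (hs : s.Nonempty) : 0 < Nat.card s :=
  Nat.card_pos_iff.2 ⟨hs.to_subtype, Set.toFinite s⟩

/-- For `H, K` in the Chermak-Delgado lattice, `H ⊔ K` is also in it and equals `HK`. -/
lemma sup_mem_CD {H K : Subgroup G} (hH : H ∈ CD G) (hK : K ∈ CD G) :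
    H ⊔ K ∈ CD G ∧ ((H ⊔ K : Subgroup G) : Set G) = ↑H * ↑K := by
  set m := cdMeasure H with hm
  have hKm : cdMeasure K = m := le_antisymm (hH K) (hK H)
  set CH := centralizer (H : Set G)
  set CK := centralizer (K : Set G)
  have cc : CH ⊓ CK = centralizer ((H ⊔ K : Subgroup G) : Set G) := by
    apply le_antisymm
    · rw [← le_centralizer_iff]
      refine sup_le ?_ ?_
      · rw [le_centralizer_iff]; exact inf_le_left
      · rw [le_centralizer_iff]; exact inf_le_right
    · exact le_inf (centralizer_le (SetLike.coe_subset_coe.2 le_sup_left))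
        (centralizer_le (SetLike.coe_subset_coe.2 le_sup_right))
  -- subset facts
  have hsub1 : (↑H * ↑K : Set G) ⊆ ((H ⊔ K : Subgroup G) : Set G) := by
    rw [Set.mul_subset_iff]
    intro a ha b hb
    exact mul_mem (le_sup_left (α := Subgroup G) ha) (le_sup_right (α := Subgroup G) hb)
  have hsub2 : (↑CH * ↑CK : Set G) ⊆ ((centralizer ((H ⊓ K : Subgroup G) : Set G)) : Set G) := by
    rw [Set.mul_subset_iff]
    intro a ha b hb
    have h1 : CH ≤ centralizer ((H ⊓ K : Subgroup G) : Set G) :=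
      centralizer_le (SetLike.coe_subset_coe.2 inf_le_left)
    have h2 : CK ≤ centralizer ((H ⊓ K : Subgroup G) : Set G) :=
      centralizer_le (SetLike.coe_subset_coe.2 inf_le_right)
    exact mul_mem (h1 ha) (h2 hb)
  set a := Nat.card (↑H * ↑K : Set G) with hadef
  set A := Nat.card (H ⊔ K : Subgroup G) with hAdef
  set b := Nat.card (↑CH * ↑CK : Set G) with hbdef
  set B := Nat.card (centralizer ((H ⊓ K : Subgroup G) : Set G)) with hBdef
  set c := Nat.card (centralizer ((H ⊔ K : Subgroup G) : Set G)) with hcdef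
  set d := Nat.card (H ⊓ K : Subgroup G) with hddef
  have key1 : a * d = Nat.card H * Nat.card K := card_mul_card_inf H K
  have key2 : b * c = Nat.card CH * Nat.card CK := by
    have := card_mul_card_inf CH CK
    rwa [cc] at this
  have haA : a ≤ A := by
    have := Nat.card_mono (Set.toFinite ((H ⊔ K : Subgroup G) : Set G)) hsub1
    simpa [Nat.card_coe_set_eq, hadef, hAdef] using this
  have hbB : b ≤ B := by
    have := Nat.card_mono (Set.toFinite _) hsub2
    simpa [Nat.card_coe_set_eq, hbdef, hBdef] using this
  have hmm : m * m = (a * c) * (d * b) := by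
    have e : cdMeasure H * cdMeasure K =
        (Nat.card H * Nat.card K) * (Nat.card CH * Nat.card CK) := by
      show (Nat.card H * Nat.card (centralizer (H : Set G))) *
        (Nat.card K * Nat.card (centralizer (K : Set G))) = _
      ring
    calc m * m = cdMeasure H * cdMeasure K := by rw [hKm]
      _ = (Nat.card H * Nat.card K) * (Nat.card CH * Nat.card CK) := e
      _ = (a * d) * (b * c) := by rw [key1, key2]
      _ = (a * c) * (d * b) := by ring
  have hupper : cdMeasure (H ⊔ K) * cdMeasure (H ⊓ K) = (A * c) * (d * B) := rfl
  have hle : m * m ≤ cdMeasure (H ⊔ K) * cdMeasure (H ⊓ K) := by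
    rw [hmm, hupper]
    exact Nat.mul_le_mul (Nat.mul_le_mul_right _ haA) (Nat.mul_le_mul_left _ hbB)
  have hge : cdMeasure (H ⊔ K) * cdMeasure (H ⊓ K) ≤ m * m :=
    Nat.mul_le_mul (hH _) (hH _)
  have heq : cdMeasure (H ⊔ K) * cdMeasure (H ⊓ K) = m * m := le_antisymm hge hle
  -- measure of the sup is maximal
  have hmpos : 0 < m := cdMeasure_pos H
  have hsupm : cdMeasure (H ⊔ K) = m := by
    have h1 : cdMeasure (H ⊔ K) ≤ m := hH _
    have h2 : m ≤ cdMeasure (H ⊔ K) := by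
      by_contra hcon
      push_neg at hcon
      have : cdMeasure (H ⊔ K) * cdMeasure (H ⊓ K) < m * m :=
        lt_of_lt_of_le (Nat.mul_lt_mul_of_lt_of_le hcon (hH _) hmpos) (le_refl _)
      omega
    exact le_antisymm h1 h2
  constructor
  · intro K'
    rw [hsupm]; exact hH K'
  · -- equality of a and A
    have hABeq : (a * c) * (d * b) = (A * c) * (d * B) := by rw [← hmm, ← hupper, heq]
    have hcpos : 0 < c := Nat.card_pos
    have hdpos : 0 < d := Nat.card_pos
    have haeq : a = A := by
      have habeq : a * b = A * B := by
        have h1 : (a * b) * (c * d) = (A * B) * (c * d) := by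
          calc (a * b) * (c * d) = (a * c) * (d * b) := by ring
            _ = (A * c) * (d * B) := hABeq
            _ = (A * B) * (c * d) := by ring
        exact Nat.eq_of_mul_eq_mul_right (Nat.mul_pos hcpos hdpos) h1
      by_contra hne
      have : a < A := lt_of_le_of_ne haA hne
      have hBpos : 0 < B := Nat.card_pos
      have : a * b < A * B := Nat.mul_lt_mul_of_lt_of_le this hbB hBpos
      omega
    have h1 : ((H ⊔ K : Subgroup G) : Set G).ncard = A := by
      rw [← Nat.card_coe_set_eq]; rfl
    have h2 : (↑H * ↑K : Set G).ncard = a := by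
      rw [← Nat.card_coe_set_eq]
    exact (Set.eq_of_subset_of_ncard_le hsub1
      (by rw [h1, h2, ← haeq]) (Set.toFinite _)).symm

/-- A group is not the product of a proper subgroup with one of its conjugates. -/
lemma not_top_eq_mul_conj {L : Subgroup G} {x : G}
    (h : ((L ⊔ conjSub L x : Subgroup G) : Set G) = ↑L * ↑(conjSub L x))
    (htop : L ⊔ conjSub L x = ⊤) : L = ⊤ := by
  have hx : x ∈ (↑L * ↑(conjSub L x) : Set G) := by
    rw [← h, htop]; trivial
  rcases hx with ⟨hL, hhL, k, hk, heq⟩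
  have hc : x * k * x⁻¹ ∈ L := mem_conjSub.1 hk
  have heq' : hL * k = x := heq
  have hxL : x ∈ L := by
    have hkx : k = hL⁻¹ * x := by rw [← heq']; group
    have hxeq : x = (x * k * x⁻¹) * hL := by rw [hkx]; group
    rw [hxeq]
    exact mul_mem hc hhL
  have := conjSub_eq_self hxL
  rw [this, sup_idem] at htop
  exact htop

end CDaux

theorem stmt2 {G : Type*} [Group G] [Fintype G] (H : Subgroup G)
    (hH : H ∈ CD G) (hlt : H < ⊤) :
    (⨆ x : G, conjSub H x) < ⊤ := by
  classical
  by_contra hcon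
  have htop : (⨆ x : G, conjSub H x) = ⊤ := by
    rcases lt_or_eq_of_le (le_top : (⨆ x : G, conjSub H x) ≤ ⊤) with h | h
    · exact absurd h hcon
    · exact h
  have hfin : Finite (Subgroup G) :=
    Finite.of_injective (fun L : Subgroup G => (L : Set G)) SetLike.coe_injective
  set S : Set (Subgroup G) :=
    {L | L ∈ CD G ∧ L < ⊤ ∧ (⨆ x : G, conjSub L x) = ⊤} with hSdef
  have hHS : H ∈ S := ⟨hH, hlt, htop⟩
  obtain ⟨L, hLS, hmax⟩ :=
    Set.Finite.exists_maximalFor (fun L : Subgroup G => Nat.card L) S (Set.toFinite S) ⟨H, hHS⟩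
  obtain ⟨hLCD, hLlt, hLtop⟩ := hLS
  -- find a conjugate not contained in L
  have hex : ∃ x : G, ¬ conjSub L x ≤ L := by
    by_contra hall
    push_neg at hall
    have : (⨆ x : G, conjSub L x) ≤ L := iSup_le hall
    rw [hLtop] at this
    exact absurd (top_le_iff.1 this) (ne_of_lt hLlt)
  obtain ⟨x, hx⟩ := hex
  have hKCD : conjSub L x ∈ CD G := by
    intro K'
    calc cdMeasure K' ≤ cdMeasure L := hLCD K'
      _ = cdMeasure (conjSub L x) := (CDaux.cdMeasure_conjSub L x).symm
  obtain ⟨hMCD, hMset⟩ := CDaux.sup_mem_CD hLCD hKCD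
  set M := L ⊔ conjSub L x with hMdef
  have hLM : L < M := left_lt_sup.2 hx
  rcases eq_or_lt_of_le (le_top : M ≤ ⊤) with hMtop | hMlt
  · -- M = ⊤ : contradiction with the conjugate-product lemma
    have := CDaux.not_top_eq_mul_conj hMset hMtop
    exact absurd this (ne_of_lt hLlt)
  · -- M < ⊤ : contradiction with maximality
    have hMS : M ∈ S := by
      refine ⟨hMCD, hMlt, ?_⟩
      apply top_le_iff.1
      rw [← hLtop]
      exact iSup_mono fun y => CDaux.conjSub_mono (le_sup_left) y
    have hcardle : Nat.card L ≤ Nat.card M := Subgroup.card_le_of_le hLM.le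
    have hcardeq : Nat.card M ≤ Nat.card L := hmax hMS hcardle
    have hcardlt : Nat.card L < Nat.card M := by
      have hss : (L : Set G) ⊂ (M : Set G) := by
        exact SetLike.coe_ssubset_coe.2 hLM
      have := Set.ncard_lt_ncard hss (Set.toFinite _)
      simpa [← Nat.card_coe_set_eq] using this
    omega
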